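/- Let X_1, …, X_n be i.i.d. with cdf F(t) = ∫ Φ(t − μ) dH(μ), where H is a probability distribution with H([0, √(2 log n)]) = 1. Then for every constant c, P(Y_n ≥ c) ≤ 2 P(W_n^+ ≥ c). -/

import Mathlib

open MeasureTheory ProbabilityTheory Filter
open scoped Classical

noncomputable section

/-- The standard normal density. -/
def stdPdf (x : ℝ) : ℝ := (Real.sqrt (2 * Real.pi))⁻¹ * Real.exp (-(x ^ 2) / 2)

/-- The standard normal cumulative distribution function. -/
def Phi (t : ℝ) : ℝ := ∫ x in Set.Iic t, stdPdf x

/-- `D(μ; τ, τ')`. -/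
def Dfun (μ τ τ' : ℝ) : ℝ := (Phi τ - Phi (τ - μ)) / (Phi τ' - Phi (τ' - μ))

/-- Empirical cdf of a sample of size `n`. -/
def empCdf (n : ℕ) (X : Fin n → ℝ) (t : ℝ) : ℝ :=
  (n : ℝ)⁻¹ * ∑ i, if X i ≤ t then (1 : ℝ) else 0

/-- Upper envelope `F⁺ₐ`. -/
def envP (n : ℕ) (a : ℝ) (G : ℝ → ℝ) (t : ℝ) : ℝ :=
  (2 * G t + a ^ 2 / n + (a / Real.sqrt n) * Real.sqrt (a ^ 2 / n + 4 * G t - 4 * (G t) ^ 2)) /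
    (2 * (1 + a ^ 2 / n))

/-- Lower envelope `F⁻ₐ`. -/
def envM (n : ℕ) (a : ℝ) (G : ℝ → ℝ) (t : ℝ) : ℝ :=
  (2 * G t + a ^ 2 / n - (a / Real.sqrt n) * Real.sqrt (a ^ 2 / n + 4 * G t - 4 * (G t) ^ 2)) /
    (2 * (1 + a ^ 2 / n))

/-- Grid points `t_j = (j - 1)/√(2 log n)`. -/
def gridPt (n : ℕ) (j : ℕ) : ℝ := ((j : ℝ) - 1) / Real.sqrt (2 * Real.log n)

/-- Right-hand side ratio used in the defining equation for `μ̂⁽ʲ⁾`. -/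
def ratioJ (n : ℕ) (a : ℝ) (X : Fin n → ℝ) (j : ℕ) : ℝ :=
  (Phi (gridPt n j) - envP n a (empCdf n X) (gridPt n j)) /
    (Phi (gridPt n (j + 1)) - envM n a (empCdf n X) (gridPt n (j + 1)))

/-- `μ̂⁽ʲ⁾`: the solution of `D(μ; t_j, t_{j+1}) = ratio`, when it exists (else 0). -/
def muHatJ (n : ℕ) (a : ℝ) (X : Fin n → ℝ) (j : ℕ) : ℝ :=
  if h : ∃ μ > 0, Dfun μ (gridPt n j) (gridPt n (j + 1)) = ratioJ n a X j then h.choose else 0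

/-- `ε̂⁽ʲ⁾ₐ`. -/
def epsHatJ (n : ℕ) (a : ℝ) (X : Fin n → ℝ) (j : ℕ) : ℝ :=
  if ∃ μ > 0, Dfun μ (gridPt n j) (gridPt n (j + 1)) = ratioJ n a X j then
    (Phi (gridPt n j) - envP n a (empCdf n X) (gridPt n j)) /
      (Phi (gridPt n j) - Phi (gridPt n j - muHatJ n a X j))
  else 0

/-- The grid estimator `ε̂*ₐ = max_j ε̂⁽ʲ⁾ₐ`. -/
def epsHatStar (n : ℕ) (a : ℝ) (X : Fin n → ℝ) : ℝ :=
  sSup ((fun j => epsHatJ n a X j) '' (Set.Icc 1 (Nat.ceil (2 * Real.log n))))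

/-- The statistic `W_n⁺`, as a function of a uniform sample. -/
def WnPlus (n : ℕ) (U : Fin n → ℝ) : ℝ :=
  sSup ((fun t => Real.sqrt n * |empCdf n U t - t| / Real.sqrt (t * (1 - t))) ''
    (Set.Icc (1 / 2) (Phi (Real.sqrt (2 * Real.log n)))))

/-- The statistic `Y_n`, as a function of the sample, for underlying cdf `F`. -/
def Yn (n : ℕ) (F : ℝ → ℝ) (X : Fin n → ℝ) : ℝ :=
  sSup ((fun t => Real.sqrt n * |empCdf n X t - F t| / Real.sqrt (F t * (1 - F t))) ''
    (Set.Icc 0 (Real.sqrt (2 * Real.log n))))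

/-- The statistic `W_n⁺⁺(c₀)`, as a function of the sample, for underlying cdf `F`. -/
def WnPP (c0 : ℝ) (n : ℕ) (F : ℝ → ℝ) (X : Fin n → ℝ) : ℝ :=
  sSup ((fun x => Real.sqrt n * |empCdf n X x - F x| / Real.sqrt (F x * (1 - F x))) ''
    {x : ℝ | empCdf n X 0 - Real.sqrt (c0 * Real.log n / n) ≤ F x ∧
      F x ≤ Phi (Real.sqrt (2 * Real.log n))})

/-- cdf of the two-point Gaussian mixture `(1-ε)N(0,1) + εN(μ,1)`. -/
def twoPointCdf (ε μ : ℝ) (t : ℝ) : ℝ := (1 - ε) * Phi t + ε * Phi (t - μ)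

/-- cdf of the one-sided Gaussian mixture `(1-ε)N(0,1) + ε ∫ N(μ,1) dH(μ)`. -/
def oneSidedCdf (ε : ℝ) (H : Measure ℝ) (t : ℝ) : ℝ :=
  (1 - ε) * Phi t + ε * ∫ m, Phi (t - m) ∂H

/-- cdf of the Uniform(0,1) distribution. -/
def unifCdf (t : ℝ) : ℝ := max 0 (min t 1)

/-- `X₁, …, Xₙ` are i.i.d. with cdf `F` under `P`. -/
def IIDWithCdf {Ω : Type} [MeasurableSpace Ω] (P : Measure Ω) {n : ℕ}
    (X : Fin n → Ω → ℝ) (F : ℝ → ℝ) : Prop :=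
  (∀ i, Measurable (X i)) ∧ iIndepFun X P ∧
    ∀ i t, P {ω | X i ω ≤ t} = ENNReal.ofReal (F t)

/-- The event that `F` lies inside the envelope on `[0, √(2 log n)]`. -/
def EnvEvent (n : ℕ) (a : ℝ) (F : ℝ → ℝ) (X : Fin n → ℝ) : Prop :=
  ∀ t ∈ Set.Icc (0 : ℝ) (Real.sqrt (2 * Real.log n)),
    envM n a (empCdf n X) t ≤ F t ∧ F t ≤ envP n a (empCdf n X) t

/-- The detection boundary `ρ*(β)`. -/
def rhoStar (β : ℝ) : ℝ :=
  if β ≤ 3 / 4 then β - 1 / 2 else (1 - Real.sqrt (1 - β)) ^ 2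


lemma stdPdf_eq : stdPdf = gaussianPDFReal 0 1 := by
  funext x
  simp [stdPdf, gaussianPDFReal, sub_zero]

lemma integrable_stdPdf : Integrable stdPdf := by
  rw [stdPdf_eq]; exact integrable_gaussianPDFReal 0 1

lemma integral_stdPdf : ∫ x, stdPdf x = 1 := by
  rw [stdPdf_eq]; exact integral_gaussianPDFReal_eq_one 0 one_ne_zero

lemma stdPdf_pos (x : ℝ) : 0 < stdPdf x := by
  rw [stdPdf_eq]; exact gaussianPDFReal_pos 0 1 x one_ne_zero

lemma stdPdf_nonneg (x : ℝ) : 0 ≤ stdPdf x := (stdPdf_pos x).le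

lemma stdPdf_le (x : ℝ) : stdPdf x ≤ (Real.sqrt (2 * Real.pi))⁻¹ := by
  unfold stdPdf
  have h1 : Real.exp (-(x^2)/2) ≤ 1 := by
    rw [Real.exp_le_one_iff]; nlinarith [sq_nonneg x]
  have h2 : (0:ℝ) < (Real.sqrt (2 * Real.pi))⁻¹ := by
    positivity
  nlinarith

lemma stdPdf_continuous : Continuous stdPdf := by
  unfold stdPdf; fun_prop

lemma stdPdf_even (x : ℝ) : stdPdf (-x) = stdPdf x := by simp [stdPdf]


lemma Phi_strictMono : StrictMono Phi := by
  intro s t hst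
  have hIic : Set.Iic t = Set.Iic s ∪ Set.Ioc s t := by
    rw [Set.Iic_union_Ioc_eq_Iic hst.le]
  have hdisj : Disjoint (Set.Iic s) (Set.Ioc s t) := by
    simp [Set.disjoint_left]
    intro a ha h1; linarith
  have : Phi t = Phi s + ∫ x in Set.Ioc s t, stdPdf x := by
    unfold Phi
    rw [hIic, setIntegral_union hdisj measurableSet_Ioc
      integrable_stdPdf.integrableOn integrable_stdPdf.integrableOn]
  rw [this, lt_add_iff_pos_right]
  rw [← intervalIntegral.integral_of_le hst.le]
  apply intervalIntegral.intervalIntegral_pos_of_pos_on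
    (integrable_stdPdf.intervalIntegrable) (fun x _ => stdPdf_pos x) hst

lemma Phi_mono : Monotone Phi := Phi_strictMono.monotone

lemma Phi_sub_le {s t : ℝ} (hst : s ≤ t) :
    Phi t - Phi s ≤ (Real.sqrt (2 * Real.pi))⁻¹ * (t - s) := by
  have hIic : Set.Iic t = Set.Iic s ∪ Set.Ioc s t := by
    rw [Set.Iic_union_Ioc_eq_Iic hst]
  have hdisj : Disjoint (Set.Iic s) (Set.Ioc s t) := by
    simp [Set.disjoint_left]
    intro a ha h1; linarith
  have h1 : Phi t = Phi s + ∫ x in Set.Ioc s t, stdPdf x := by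
    unfold Phi
    rw [hIic, setIntegral_union hdisj measurableSet_Ioc
      integrable_stdPdf.integrableOn integrable_stdPdf.integrableOn]
  have h2 : ∫ x in Set.Ioc s t, stdPdf x ≤
      ∫ _x in Set.Ioc s t, (Real.sqrt (2 * Real.pi))⁻¹ := by
    apply setIntegral_mono_on integrable_stdPdf.integrableOn
      (integrableOn_const measure_Ioc_lt_top.ne) measurableSet_Ioc
    intro x _; exact stdPdf_le x
  rw [setIntegral_const] at h2
  simp only [measureReal_def, Real.volume_Ioc, smul_eq_mul] at h2
  rw [ENNReal.toReal_ofReal (by linarith)] at h2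
  nlinarith [h2]

lemma Phi_lipschitz (s t : ℝ) : |Phi t - Phi s| ≤ (Real.sqrt (2 * Real.pi))⁻¹ * |t - s| := by
  rcases le_total s t with h | h
  · rw [abs_of_nonneg (by linarith [Phi_mono h]), abs_of_nonneg (by linarith)]
    exact Phi_sub_le h
  · rw [abs_of_nonpos (by linarith [Phi_mono h]), abs_of_nonpos (by linarith)]
    have := Phi_sub_le h; linarith

lemma Phi_continuous : Continuous Phi := by
  rw [Metric.continuous_iff]
  intro t ε hε
  set K := (Real.sqrt (2 * Real.pi))⁻¹ with hK
  have hKpos : 0 < K := by positivity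
  refine ⟨ε / K, by positivity, fun s hs => ?_⟩
  rw [Real.dist_eq] at hs ⊢
  calc |Phi s - Phi t| ≤ K * |s - t| := Phi_lipschitz t s
    _ < K * (ε / K) := by apply mul_lt_mul_of_pos_left hs hKpos
    _ = ε := by field_simp

lemma Phi_pos (t : ℝ) : 0 < Phi t := by
  have := Phi_strictMono (show t - 1 < t by linarith)
  have h0 : 0 ≤ Phi (t-1) := by
    unfold Phi
    exact setIntegral_nonneg measurableSet_Iic (fun x _ => stdPdf_nonneg x)
  linarith

lemma Phi_le_one (t : ℝ) : Phi t ≤ 1 := by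
  rw [← integral_stdPdf]
  unfold Phi
  exact setIntegral_le_integral integrable_stdPdf (Filter.Eventually.of_forall stdPdf_nonneg)

lemma Phi_neg (t : ℝ) : Phi (-t) = 1 - Phi t := by
  have h2 : Phi (-t) = ∫ x in Set.Ioi t, stdPdf x := by
    unfold Phi
    rw [show Set.Ioi t = Set.Ioi (-(-t)) by rw [neg_neg], ← integral_comp_neg_Iic (-t) stdPdf]
    apply setIntegral_congr_fun measurableSet_Iic
    intro x _
    exact (stdPdf_even x).symm
  have h3 : Phi t + ∫ x in Set.Ioi t, stdPdf x = 1 := by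
    rw [← integral_stdPdf]
    unfold Phi
    rw [← integral_add_compl measurableSet_Iic integrable_stdPdf]
    congr 1
    · congr 1
      simp [Set.compl_Iic]
  linarith

lemma Phi_zero : Phi 0 = 1 / 2 := by
  have := Phi_neg 0
  rw [neg_zero] at this; linarith

lemma Phi_half_le {t : ℝ} (ht : 0 ≤ t) : 1/2 ≤ Phi t := by
  rw [← Phi_zero]; exact Phi_mono ht

lemma Phi_lt_one (t : ℝ) : Phi t < 1 := by
  have := Phi_pos (-t)
  have := Phi_neg t
  linarith

lemma Phi_tail (t : ℝ) :
    Phi t ≤ (Real.sqrt (2 * Real.pi))⁻¹ * Real.exp (1/2) * Real.exp t := by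
  have key : ∀ x : ℝ, stdPdf x ≤ (Real.sqrt (2 * Real.pi))⁻¹ * Real.exp (1/2) * Real.exp x := by
    intro x
    unfold stdPdf
    rw [mul_assoc, ← Real.exp_add]
    apply mul_le_mul_of_nonneg_left _ (by positivity)
    apply Real.exp_le_exp.2
    nlinarith [sq_nonneg (x+1)]
  unfold Phi
  calc ∫ x in Set.Iic t, stdPdf x
      ≤ ∫ x in Set.Iic t, (Real.sqrt (2 * Real.pi))⁻¹ * Real.exp (1/2) * Real.exp x := by
        apply setIntegral_mono_on integrable_stdPdf.integrableOn
          (((integrableOn_exp_Iic t).const_mul _))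
          measurableSet_Iic (fun x _ => key x)
    _ = (Real.sqrt (2 * Real.pi))⁻¹ * Real.exp (1/2) * Real.exp t := by
        rw [MeasureTheory.integral_const_mul, integral_exp_Iic]

lemma tendsto_Phi_atBot : Tendsto Phi atBot (nhds 0) := by
  apply squeeze_zero' (Filter.Eventually.of_forall (fun t => (Phi_pos t).le))
    (Filter.Eventually.of_forall Phi_tail)
  rw [show (0:ℝ) = (Real.sqrt (2 * Real.pi))⁻¹ * Real.exp (1/2) * 0 by ring]
  exact (Real.tendsto_exp_atBot).const_mul _

lemma tendsto_Phi_atTop : Tendsto Phi atTop (nhds 1) := by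
  have : Phi = fun t => 1 - Phi (-(t)) := by
    funext t; rw [Phi_neg]; ring
  rw [this]
  have h2 : Tendsto (fun t : ℝ => Phi (-t)) atTop (nhds 0) :=
    tendsto_Phi_atBot.comp tendsto_neg_atTop_atBot
  simpa using (tendsto_const_nhds.sub h2)


section Fsec
variable {H : Measure ℝ} [IsProbabilityMeasure H] {T : ℝ}

lemma Phi_meas : Measurable Phi := Phi_continuous.measurable

lemma integrable_PhiShift (t : ℝ) : Integrable (fun m => Phi (t - m)) H := by
  apply MeasureTheory.Integrable.mono' (integrable_const (1:ℝ))
  · exact (Phi_meas.comp (measurable_const.sub measurable_id)).aestronglyMeasurable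
  · apply Filter.Eventually.of_forall
    intro m
    rw [Real.norm_eq_abs, abs_of_nonneg (Phi_pos _).le]
    exact (Phi_lt_one _).le

lemma ae_mem_Icc (hsupp : H (Set.Icc 0 T) = 1) : ∀ᵐ m ∂H, m ∈ Set.Icc (0:ℝ) T := by
  rw [MeasureTheory.ae_iff]
  have h1 : H {a | ¬ a ∈ Set.Icc (0:ℝ) T} = H (Set.Icc (0:ℝ) T)ᶜ := rfl
  rw [h1, measure_compl measurableSet_Icc (measure_ne_top _ _), hsupp]
  simp

lemma F_le_Phi (hsupp : H (Set.Icc 0 T) = 1) (t : ℝ) : (∫ m, Phi (t - m) ∂H) ≤ Phi t := by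
  have : (∫ m, Phi (t - m) ∂H) ≤ ∫ _m, Phi t ∂H := by
    apply integral_mono_ae (integrable_PhiShift t) (integrable_const _)
    filter_upwards [ae_mem_Icc hsupp] with m hm
    exact Phi_mono (by linarith [hm.1])
  simpa using this

lemma Phi_le_F (hsupp : H (Set.Icc 0 T) = 1) (t : ℝ) : Phi (t - T) ≤ ∫ m, Phi (t - m) ∂H := by
  have : (∫ _m, Phi (t - T) ∂H) ≤ ∫ m, Phi (t - m) ∂H := by
    apply integral_mono_ae (integrable_const _) (integrable_PhiShift t)
    filter_upwards [ae_mem_Icc hsupp] with m hm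
    exact Phi_mono (by linarith [hm.2])
  simpa using this

lemma F_strictMono : StrictMono (fun t => ∫ m, Phi (t - m) ∂H) := by
  intro s t hst
  simp only
  rw [← sub_pos, ← MeasureTheory.integral_sub (integrable_PhiShift t) (integrable_PhiShift s)]
  rw [MeasureTheory.integral_pos_iff_support_of_nonneg]
  · have : (Function.support fun m => Phi (t - m) - Phi (s - m)) = Set.univ := by
      ext m; simp only [Function.mem_support, Set.mem_univ, iff_true]
      have := Phi_strictMono (show s - m < t - m by linarith)
      intro h; rw [sub_eq_zero] at h; exact absurd h.symm this.ne
    rw [this]; simp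
  · intro m
    simp only [Pi.zero_apply, Pi.sub_apply, sub_nonneg]
    exact Phi_mono (by linarith)
  · exact (integrable_PhiShift t).sub (integrable_PhiShift s)

lemma F_continuous : Continuous (fun t => ∫ m, Phi (t - m) ∂H) := by
  rw [Metric.continuous_iff]
  intro t ε hε
  set K := (Real.sqrt (2 * Real.pi))⁻¹ with hK
  have hKpos : 0 < K := by positivity
  refine ⟨ε / K, by positivity, fun s hs => ?_⟩
  rw [Real.dist_eq] at hs ⊢
  have h1 : |(∫ m, Phi (s - m) ∂H) - ∫ m, Phi (t - m) ∂H| ≤ K * |s - t| := by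
    rw [← MeasureTheory.integral_sub (integrable_PhiShift s) (integrable_PhiShift t)]
    calc |∫ m, (Phi (s - m) - Phi (t - m)) ∂H| ≤ ∫ m, |Phi (s - m) - Phi (t - m)| ∂H := by
          simpa using MeasureTheory.norm_integral_le_integral_norm (μ := H)
            (fun m => Phi (s - m) - Phi (t - m))
      _ ≤ ∫ _m, K * |s - t| ∂H := by
          apply integral_mono_ae _ (integrable_const _)
          · apply Filter.Eventually.of_forall
            intro m
            have := Phi_lipschitz (t - m) (s - m)
            rw [hK]
            have heq : s - m - (t - m) = s - t := by ring
            rwa [heq] at this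
          · exact ((integrable_PhiShift s).sub (integrable_PhiShift t)).abs
      _ = K * |s - t| := by simp
  calc |(∫ m, Phi (s - m) ∂H) - ∫ m, Phi (t - m) ∂H| ≤ K * |s - t| := h1
    _ < K * (ε / K) := by apply mul_lt_mul_of_pos_left hs hKpos
    _ = ε := by field_simp

lemma F_exists_eq (hsupp : H (Set.Icc 0 T) = 1) {u : ℝ} (hu0 : 0 < u) (hu1 : u < 1) :
    ∃ t : ℝ, (∫ m, Phi (t - m) ∂H) = u := by
  set F := fun t => ∫ m, Phi (t - m) ∂H with hF
  have h0 : Tendsto F atBot (nhds 0) := by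
    apply squeeze_zero'
      (Filter.Eventually.of_forall fun t => le_of_lt ((Phi_pos (t-T)).trans_le (Phi_le_F hsupp t)))
      (Filter.Eventually.of_forall (F_le_Phi hsupp)) tendsto_Phi_atBot
  have h1 : Tendsto (fun t => Phi (t - T)) atTop (nhds 1) :=
    tendsto_Phi_atTop.comp (tendsto_atTop_add_const_right _ _ tendsto_id)
  obtain ⟨a, ha⟩ : ∃ a, F a < u := by
    have := (tendsto_order.1 h0).2 u hu0
    exact this.exists
  obtain ⟨b, hb⟩ : ∃ b, u < F b := by
    have h2 : ∀ᶠ t in atTop, u < Phi (t - T) := (tendsto_order.1 h1).1 u hu1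
    obtain ⟨b, hb⟩ := h2.exists
    exact ⟨b, hb.trans_le (Phi_le_F hsupp b)⟩
  have : u ∈ Set.Icc (F a) (F b) := ⟨ha.le, hb.le⟩
  obtain ⟨t, ht⟩ := intermediate_value_univ a b F_continuous this
  exact ⟨t, ht⟩

end Fsec


def empS (n : ℕ) (X : Fin n → ℝ) (t : ℝ) : ℝ :=
  (n : ℝ)⁻¹ * ∑ i, if X i < t then (1 : ℝ) else 0

def ratioFn (n : ℕ) (v : Fin n → ℝ) (t : ℝ) : ℝ :=
  Real.sqrt n * |empCdf n v t - t| / Real.sqrt (t * (1 - t))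

def ratioFn' (n : ℕ) (v : Fin n → ℝ) (t : ℝ) : ℝ :=
  Real.sqrt n * |empS n v t - t| / Real.sqrt (t * (1 - t))

lemma sum_ind_nonneg {n : ℕ} (f : Fin n → Prop) [DecidablePred f] :
    (0:ℝ) ≤ ∑ i, if f i then (1:ℝ) else 0 := by
  apply Finset.sum_nonneg; intro i _; split <;> norm_num

lemma sum_ind_le {n : ℕ} (f : Fin n → Prop) [DecidablePred f] :
    (∑ i, if f i then (1:ℝ) else 0) ≤ n := by
  calc (∑ i, if f i then (1:ℝ) else 0) ≤ ∑ _i : Fin n, (1:ℝ) := by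
        apply Finset.sum_le_sum; intro i _; split <;> norm_num
    _ = n := by simp

lemma empCdf_nonneg (n : ℕ) (v : Fin n → ℝ) (t : ℝ) : 0 ≤ empCdf n v t := by
  unfold empCdf
  apply mul_nonneg (by positivity) (sum_ind_nonneg _)

lemma empCdf_le_one (n : ℕ) (v : Fin n → ℝ) (t : ℝ) : empCdf n v t ≤ 1 := by
  unfold empCdf
  rcases Nat.eq_zero_or_pos n with h | h
  · subst h; simp
  · have hn : (0:ℝ) < n := by exact_mod_cast h
    rw [inv_mul_le_iff₀ hn, mul_one]
    exact sum_ind_le _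

lemma empS_nonneg (n : ℕ) (v : Fin n → ℝ) (t : ℝ) : 0 ≤ empS n v t := by
  unfold empS
  apply mul_nonneg (by positivity) (sum_ind_nonneg _)

lemma empS_le_one (n : ℕ) (v : Fin n → ℝ) (t : ℝ) : empS n v t ≤ 1 := by
  unfold empS
  rcases Nat.eq_zero_or_pos n with h | h
  · subst h; simp
  · have hn : (0:ℝ) < n := by exact_mod_cast h
    rw [inv_mul_le_iff₀ hn, mul_one]
    exact sum_ind_le _

lemma ratio_aux_le {n : ℕ} {b A t : ℝ} (hb1 : b < 1) (hA0 : 0 ≤ A) (hA1 : A ≤ 1)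
    (ht : t ∈ Set.Icc (1-b) b) :
    Real.sqrt n * |A - t| / Real.sqrt (t * (1 - t)) ≤ Real.sqrt n / (1 - b) := by
  obtain ⟨ht1, ht2⟩ := ht
  have hb0 : 0 < 1 - b := by linarith
  have habs : |A - t| ≤ 1 := by
    rw [abs_le]; constructor <;> nlinarith
  have hden : (1 - b) ≤ Real.sqrt (t * (1 - t)) := by
    rw [show (1-b) = Real.sqrt ((1-b)^2) by rw [Real.sqrt_sq hb0.le]]
    apply Real.sqrt_le_sqrt
    nlinarith
  apply div_le_div₀ (Real.sqrt_nonneg _) _ hb0 hden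
  nlinarith [Real.sqrt_nonneg (n:ℝ)]

lemma ratioFn_le {n : ℕ} {b t : ℝ} (hb1 : b < 1) (v : Fin n → ℝ)
    (ht : t ∈ Set.Icc (1-b) b) : ratioFn n v t ≤ Real.sqrt n / (1 - b) :=
  ratio_aux_le hb1 (empCdf_nonneg n v t) (empCdf_le_one n v t) ht

lemma ratioFn'_le {n : ℕ} {b t : ℝ} (hb1 : b < 1) (v : Fin n → ℝ)
    (ht : t ∈ Set.Icc (1-b) b) : ratioFn' n v t ≤ Real.sqrt n / (1 - b) :=
  ratio_aux_le hb1 (empS_nonneg n v t) (empS_le_one n v t) ht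

lemma bddAbove_ratioFn {n : ℕ} {b : ℝ} (hb1 : b < 1) (v : Fin n → ℝ)
    {s : Set ℝ} (hs : s ⊆ Set.Icc (1-b) b) : BddAbove (ratioFn n v '' s) := by
  refine ⟨Real.sqrt n / (1 - b), ?_⟩
  rintro r ⟨t, ht, rfl⟩
  exact ratioFn_le hb1 v (hs ht)

lemma bddAbove_ratioFn' {n : ℕ} {b : ℝ} (hb1 : b < 1) (v : Fin n → ℝ)
    {s : Set ℝ} (hs : s ⊆ Set.Icc (1-b) b) : BddAbove (ratioFn' n v '' s) := by
  refine ⟨Real.sqrt n / (1 - b), ?_⟩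
  rintro r ⟨t, ht, rfl⟩
  exact ratioFn'_le hb1 v (hs ht)


lemma empCdf_loc_const_right (n : ℕ) (v : Fin n → ℝ) (t : ℝ) :
    ∃ δ > 0, ∀ x, t ≤ x → x < t + δ → empCdf n v x = empCdf n v t := by
  classical
  set s := Finset.univ.filter (fun i => t < v i) with hs
  by_cases h : s.Nonempty
  · refine ⟨s.inf' h (fun i => v i - t), ?_, ?_⟩
    · rw [gt_iff_lt, Finset.lt_inf'_iff]
      intro i hi
      simp only [hs, Finset.mem_filter] at hi
      linarith [hi.2]
    · intro x hx1 hx2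
      unfold empCdf
      congr 1
      apply Finset.sum_congr rfl
      intro i _
      by_cases hvi : v i ≤ t
      · rw [if_pos hvi, if_pos (hvi.trans hx1)]
      · push_neg at hvi
        have hi : i ∈ s := by simp [hs, hvi]
        have := Finset.inf'_le (fun i => v i - t) hi
        rw [if_neg (by linarith), if_neg (by linarith)]
  · refine ⟨1, one_pos, ?_⟩
    intro x hx1 _
    unfold empCdf
    congr 1
    apply Finset.sum_congr rfl
    intro i _
    have hvi : v i ≤ t := by
      by_contra hc
      exact h ⟨i, by simp [hs]; push_neg at hc; exact hc⟩
    rw [if_pos hvi, if_pos (hvi.trans hx1)]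

lemma empCdf_loc_const_left (n : ℕ) (v : Fin n → ℝ) (t : ℝ) :
    ∃ δ > 0, ∀ x, t - δ < x → x < t → empCdf n v x = empS n v t := by
  classical
  set s := Finset.univ.filter (fun i => v i < t) with hs
  by_cases h : s.Nonempty
  · refine ⟨s.inf' h (fun i => t - v i), ?_, ?_⟩
    · rw [gt_iff_lt, Finset.lt_inf'_iff]
      intro i hi
      simp only [hs, Finset.mem_filter] at hi
      linarith [hi.2]
    · intro x hx1 hx2
      unfold empCdf empS
      congr 1
      apply Finset.sum_congr rfl
      intro i _
      by_cases hvi : v i < t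
      · have hi : i ∈ s := by simp [hs, hvi]
        have := Finset.inf'_le (fun i => t - v i) hi
        rw [if_pos (by linarith), if_pos hvi]
      · push_neg at hvi
        rw [if_neg (by linarith), if_neg (by push_neg; linarith)]
  · refine ⟨1, one_pos, ?_⟩
    intro x hx1 hx2
    unfold empCdf empS
    congr 1
    apply Finset.sum_congr rfl
    intro i _
    have hvi : ¬ v i < t := by
      by_contra hc
      exact h ⟨i, by simp [hs]; exact hc⟩
    push_neg at hvi
    rw [if_neg (by push_neg; linarith), if_neg (by push_neg; exact hvi)]

lemma measurable_empCdf (n : ℕ) (t : ℝ) : Measurable (fun v : Fin n → ℝ => empCdf n v t) := by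
  unfold empCdf
  apply Measurable.const_mul
  apply Finset.measurable_sum
  intro i _
  apply Measurable.ite _ measurable_const measurable_const
  exact measurableSet_le (measurable_pi_apply i) measurable_const

lemma measurable_ratioFn (n : ℕ) (t : ℝ) : Measurable (fun v : Fin n → ℝ => ratioFn n v t) := by
  unfold ratioFn
  apply Measurable.div_const
  apply Measurable.const_mul
  exact ((measurable_empCdf n t).sub measurable_const).abs


def Dset (b : ℝ) : Set ℝ := insert b ((Set.Icc (1/2:ℝ) b) ∩ Set.range ((↑) : ℚ → ℝ))

lemma Dset_countable (b : ℝ) : (Dset b).Countable :=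
  (Set.Countable.mono Set.inter_subset_right (Set.countable_range _)).insert b

lemma Dset_nonempty (b : ℝ) : (Dset b).Nonempty := ⟨b, Set.mem_insert _ _⟩

lemma Dset_subset {b : ℝ} (hb2 : 1/2 ≤ b) : Dset b ⊆ Set.Icc (1/2) b := by
  exact Set.insert_subset (Set.mem_Icc.2 ⟨hb2, le_refl b⟩) Set.inter_subset_left

lemma Icc_half_subset {b : ℝ} (hb2 : 1/2 ≤ b) :
    Set.Icc (1/2:ℝ) b ⊆ Set.Icc (1-b) b := fun t ht => ⟨by linarith [ht.1], ht.2⟩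

lemma continuousAt_gfun {x : ℝ} (n : ℕ) (A : ℝ) (hx0 : 0 < x) (hx1 : x < 1) :
    ContinuousAt (fun x : ℝ => Real.sqrt n * |A - x| / Real.sqrt (x * (1 - x))) x := by
  apply ContinuousAt.div
  · exact (continuous_const.mul ((continuous_const.sub continuous_id).abs)).continuousAt
  · exact (Real.continuous_sqrt.comp (continuous_id.mul (continuous_const.sub continuous_id))).continuousAt
  · rw [Real.sqrt_ne_zero']
    nlinarith

lemma sSup_ratio_eq {n : ℕ} {b : ℝ} (hb2 : 1/2 ≤ b) (hb1 : b < 1) (v : Fin n → ℝ) :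
    sSup (ratioFn n v '' Set.Icc (1/2) b) = sSup (ratioFn n v '' Dset b) := by
  have hbdd : BddAbove (ratioFn n v '' Set.Icc (1/2) b) :=
    bddAbove_ratioFn hb1 v (Icc_half_subset hb2)
  have hbddD : BddAbove (ratioFn n v '' Dset b) :=
    hbdd.mono (Set.image_mono (Dset_subset hb2))
  apply le_antisymm
  · apply csSup_le (Set.Nonempty.image _ ⟨1/2, Set.left_mem_Icc.2 hb2⟩)
    rintro r ⟨t, ht, rfl⟩
    by_cases htb : t = b
    · subst htb
      exact le_csSup hbddD ⟨t, Set.mem_insert _ _, rfl⟩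
    · have htb' : t < b := lt_of_le_of_ne ht.2 htb
      apply le_of_forall_pos_le_add
      intro ε hε
      obtain ⟨δ, hδ, hloc⟩ := empCdf_loc_const_right n v t
      set A := empCdf n v t with hA
      set g := fun x : ℝ => Real.sqrt n * |A - x| / Real.sqrt (x * (1 - x)) with hg
      have hgc : ContinuousAt g t := continuousAt_gfun n A (by linarith [ht.1]) (by linarith)
      obtain ⟨δ', hδ', hcont⟩ := Metric.continuousAt_iff.1 hgc ε hε
      have hlt : t < t + min δ (min δ' (b - t)) := by
        have : 0 < min δ (min δ' (b - t)) := by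
          apply lt_min hδ (lt_min hδ' (by linarith))
        linarith
      obtain ⟨q, hq1, hq2⟩ := exists_rat_btwn hlt
      have hq3 : (q:ℝ) < t + δ := lt_of_lt_of_le hq2 (by
        apply add_le_add (le_refl t) (min_le_left _ _))
      have hq4 : (q:ℝ) < b := by
        have := lt_of_lt_of_le hq2 (add_le_add (le_refl t) ((min_le_right _ _).trans (min_le_right _ _)))
        linarith
      have hq5 : dist (q:ℝ) t < δ' := by
        rw [Real.dist_eq, abs_of_pos (by linarith)]
        have := lt_of_lt_of_le hq2 (add_le_add (le_refl t) ((min_le_right _ _).trans (min_le_left _ _)))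
        linarith
      have hgq : ratioFn n v q = g q := by
        rw [hg, ratioFn, hloc q hq1.le hq3]
      have hrt : ratioFn n v t = g t := rfl
      have hmem : (q:ℝ) ∈ Dset b := by
        apply Set.mem_insert_of_mem
        exact ⟨⟨by linarith [ht.1], hq4.le⟩, ⟨q, rfl⟩⟩
      have h1 : g q ≤ sSup (ratioFn n v '' Dset b) := by
        rw [← hgq]
        exact le_csSup hbddD ⟨q, hmem, rfl⟩
      have h2 : |g q - g t| < ε := by
        have := hcont hq5
        rwa [Real.dist_eq] at this
      rw [hrt]
      have := abs_lt.1 h2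
      linarith
  · apply csSup_le_csSup hbdd ((Dset_nonempty b).image _)
    exact Set.image_mono (Dset_subset hb2)

lemma measurable_sSup_ratio {n : ℕ} {b : ℝ} (hb2 : 1/2 ≤ b) (hb1 : b < 1) :
    Measurable (fun v : Fin n → ℝ => sSup (ratioFn n v '' Set.Icc (1/2) b)) := by
  obtain ⟨e, he⟩ := Set.Countable.exists_eq_range (Dset_countable b) (Dset_nonempty b)
  have : (fun v : Fin n → ℝ => sSup (ratioFn n v '' Set.Icc (1/2) b))
      = fun v => ⨆ k : ℕ, ratioFn n v (e k) := by
    funext v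
    rw [sSup_ratio_eq hb2 hb1 v, he, ← Set.range_comp]
    rfl
  rw [this]
  exact Measurable.iSup (fun k => measurable_ratioFn n (e k))

lemma sSup_ratio'_le {n : ℕ} {b : ℝ} (hb2 : 1/2 ≤ b) (hb1 : b < 1) (v : Fin n → ℝ)
    (hv : ∀ i, v i ≠ 1/2) :
    sSup (ratioFn' n v '' Set.Icc (1/2) b) ≤ sSup (ratioFn n v '' Set.Icc (1/2) b) := by
  have hbdd : BddAbove (ratioFn n v '' Set.Icc (1/2) b) :=
    bddAbove_ratioFn hb1 v (Icc_half_subset hb2)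
  apply csSup_le (Set.Nonempty.image _ ⟨1/2, Set.left_mem_Icc.2 hb2⟩)
  rintro r ⟨s, hs, rfl⟩
  by_cases hatom : ∀ i, v i ≠ s
  · have heq : empS n v s = empCdf n v s := by
      unfold empS empCdf
      congr 1
      apply Finset.sum_congr rfl
      intro i _
      by_cases h1 : v i < s
      · rw [if_pos h1, if_pos h1.le]
      · push_neg at h1
        have h2 : ¬ v i ≤ s := fun hc => hatom i (le_antisymm hc h1)
        rw [if_neg (not_lt.2 h1), if_neg h2]
    have : ratioFn' n v s = ratioFn n v s := by
      unfold ratioFn' ratioFn; rw [heq]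
    rw [this]
    exact le_csSup hbdd ⟨s, hs, rfl⟩
  · push_neg at hatom
    obtain ⟨i, hi⟩ := hatom
    have hs2 : 1/2 < s := lt_of_le_of_ne hs.1 (fun hc => hv i (hi.trans hc.symm))
    obtain ⟨δ, hδ, hloc⟩ := empCdf_loc_const_left n v s
    set A := empS n v s with hA
    set g := fun x : ℝ => Real.sqrt n * |A - x| / Real.sqrt (x * (1 - x)) with hg
    have hgc : ContinuousAt g s := continuousAt_gfun n A (by linarith) (by linarith [hs.2])
    have htend : Tendsto g (nhdsWithin s (Set.Iio s)) (nhds (g s)) :=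
      hgc.tendsto.mono_left nhdsWithin_le_nhds
    have hev : ∀ᶠ x in nhdsWithin s (Set.Iio s),
        g x ≤ sSup (ratioFn n v '' Set.Icc (1/2) b) := by
      have hmem : Set.Ioo (max (1/2) (s - δ)) s ∈ nhdsWithin s (Set.Iio s) := by
        apply Ioo_mem_nhdsLT_of_mem
        constructor
        · apply max_lt hs2 (by linarith)
        · exact le_refl s
      filter_upwards [hmem] with x hx
      have hx1 : 1/2 ≤ x := le_of_lt (lt_of_le_of_lt (le_max_left _ _) hx.1)
      have hx2 : s - δ < x := lt_of_le_of_lt (le_max_right _ _) hx.1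
      have hgx : g x = ratioFn n v x := by
        rw [hg, ratioFn, hloc x hx2 hx.2]
      rw [hgx]
      exact le_csSup hbdd ⟨x, ⟨hx1, le_of_lt (lt_of_lt_of_le hx.2 hs.2)⟩, rfl⟩
    have : ratioFn' n v s = g s := rfl
    rw [this]
    exact le_of_tendsto htend hev

lemma ratio_reflect (n : ℕ) (v : Fin n → ℝ) (s : ℝ) :
    ratioFn n v (1 - s) = ratioFn' n (fun i => 1 - v i) s := by
  have hden : (1 - s) * (1 - (1 - s)) = s * (1 - s) := by ring
  unfold ratioFn ratioFn'
  rw [hden]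
  rcases Nat.eq_zero_or_pos n with h | h
  · subst h; simp
  · have hn : ((n:ℝ)) ≠ 0 := by positivity
    congr 1
    unfold empCdf empS
    have hsum : (∑ i, if v i ≤ 1 - s then (1:ℝ) else 0)
        = n - ∑ i, if 1 - v i < s then (1:ℝ) else 0 := by
      rw [eq_sub_iff_add_eq, ← Finset.sum_add_distrib]
      have : ∀ i : Fin n, ((if v i ≤ 1 - s then (1:ℝ) else 0) + if 1 - v i < s then (1:ℝ) else 0) = 1 := by
        intro i
        by_cases h1 : v i ≤ 1 - s
        · rw [if_pos h1, if_neg (by push_neg; linarith), add_zero]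
        · push_neg at h1
          rw [if_neg (by push_neg; linarith), if_pos (by linarith), zero_add]
      rw [Finset.sum_congr rfl (fun i _ => this i)]
      simp
    rw [hsum, abs_sub_comm]
    congr 1
    field_simp
    ring

lemma reflect_sSup (n : ℕ) (v : Fin n → ℝ) (b : ℝ) :
    sSup (ratioFn n v '' Set.Icc (1-b) (1/2))
      = sSup (ratioFn' n (fun i => 1 - v i) '' Set.Icc (1/2) b) := by
  congr 1
  have himg : Set.Icc (1-b) (1/2:ℝ) = (fun s => 1 - s) '' Set.Icc (1/2) b := by
    rw [Set.image_const_sub_Icc]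
    norm_num
  rw [himg, Set.image_image]
  apply Set.image_congr
  intro s _
  exact ratio_reflect n v s


lemma map_eq_pi {n : ℕ} {Ω : Type} [MeasurableSpace Ω] (P : Measure Ω) [IsProbabilityMeasure P]
    (X : Fin n → Ω → ℝ) (hmeas : ∀ i, Measurable (X i))
    (hindep : iIndepFun X P) :
    P.map (fun ω i => X i ω) = Measure.pi (fun i => P.map (X i)) := by
  haveI : ∀ i, IsProbabilityMeasure (P.map (X i)) :=
    fun i => Measure.isProbabilityMeasure_map (hmeas i).aemeasurable
  symm
  apply Measure.pi_eq
  intro s hs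
  rw [Measure.map_apply (measurable_pi_lambda _ hmeas) (MeasurableSet.univ_pi hs)]
  have hpre : (fun ω i => X i ω) ⁻¹' (Set.univ.pi s) = ⋂ i, X i ⁻¹' (s i) := by
    ext ω; simp
  rw [hpre, hindep.meas_iInter (fun i => ⟨s i, hs i, rfl⟩)]
  exact Finset.prod_congr rfl (fun i _ => (Measure.map_apply (hmeas i) (hs i)).symm)

lemma measure_lt_eq {Ω : Type} [MeasurableSpace Ω] {P : Measure Ω} [IsProbabilityMeasure P]
    {Y : Ω → ℝ} {G : ℝ → ℝ} (hGc : Continuous G) (hGm : Monotone G)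
    (hc : ∀ t, P {ω | Y ω ≤ t} = ENNReal.ofReal (G t)) (t₀ : ℝ) :
    P {ω | Y ω < t₀} = ENNReal.ofReal (G t₀) := by
  have hunion : {ω | Y ω < t₀} = ⋃ k : ℕ, {ω | Y ω ≤ t₀ - 1/((k:ℝ)+1)} := by
    ext ω
    simp only [Set.mem_setOf_eq, Set.mem_iUnion]
    constructor
    · intro h
      obtain ⟨k, hk⟩ := exists_nat_one_div_lt (show 0 < t₀ - Y ω by linarith)
      exact ⟨k, by push_cast at hk ⊢; linarith⟩
    · rintro ⟨k, hk⟩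
      have : 0 < 1/((k:ℝ)+1) := by positivity
      linarith
  have hmono : Monotone (fun k : ℕ => {ω | Y ω ≤ t₀ - 1/((k:ℝ)+1)}) := by
    intro k l hkl ω hω
    simp only [Set.mem_setOf_eq] at hω ⊢
    have hle : 1/((l:ℝ)+1) ≤ 1/((k:ℝ)+1) := by
      apply one_div_le_one_div_of_le (by positivity)
      have : (k:ℝ) ≤ l := by exact_mod_cast hkl
      linarith
    linarith
  rw [hunion, Directed.measure_iUnion hmono.directed_le]
  have hvals : ∀ k : ℕ, P {ω | Y ω ≤ t₀ - 1/((k:ℝ)+1)} = ENNReal.ofReal (G (t₀ - 1/((k:ℝ)+1))) :=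
    fun k => hc _
  simp_rw [hvals]
  have hmono2 : Monotone (fun k : ℕ => ENNReal.ofReal (G (t₀ - 1/((k:ℝ)+1)))) := by
    intro k l hkl
    apply ENNReal.ofReal_le_ofReal
    apply hGm
    have hle : 1/((l:ℝ)+1) ≤ 1/((k:ℝ)+1) := by
      apply one_div_le_one_div_of_le (by positivity)
      have : (k:ℝ) ≤ l := by exact_mod_cast hkl
      linarith
    linarith
  have hseq : Tendsto (fun k : ℕ => t₀ - 1/((k:ℝ)+1)) atTop (nhds t₀) := by
    have := tendsto_one_div_add_atTop_nhds_zero_nat (𝕜 := ℝ)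
    have h2 := Tendsto.sub (tendsto_const_nhds (α := ℕ) (x := t₀) (f := atTop)) this
    simpa using h2
  have htends : Tendsto (fun k : ℕ => ENNReal.ofReal (G (t₀ - 1/((k:ℝ)+1)))) atTop
      (nhds (ENNReal.ofReal (G t₀))) :=
    (ENNReal.continuous_ofReal.tendsto _).comp ((hGc.tendsto t₀).comp hseq)
  exact tendsto_nhds_unique (tendsto_atTop_iSup hmono2) htends

lemma measure_eq_pt {Ω : Type} [MeasurableSpace Ω] {P : Measure Ω} [IsProbabilityMeasure P]
    {Y : Ω → ℝ} (hm : Measurable Y) {G : ℝ → ℝ} (hGc : Continuous G) (hGm : Monotone G)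
    (hc : ∀ t, P {ω | Y ω ≤ t} = ENNReal.ofReal (G t)) (t₀ : ℝ) :
    P {ω | Y ω = t₀} = 0 := by
  have h1 : {ω | Y ω = t₀} = {ω | Y ω ≤ t₀} \ {ω | Y ω < t₀} := by
    ext ω
    simp only [Set.mem_setOf_eq, Set.mem_diff, not_lt]
    constructor
    · intro h; exact ⟨h.le, h.ge⟩
    · intro ⟨h1, h2⟩; exact le_antisymm h1 h2
  rw [h1]
  have hd := measure_diff (μ := P) (s₁ := {ω | Y ω ≤ t₀}) (s₂ := {ω | Y ω < t₀})
    (fun ω h => le_of_lt (show Y ω < t₀ from h))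
    (show MeasurableSet {ω | Y ω < t₀} from hm measurableSet_Iio).nullMeasurableSet
    (measure_ne_top P _)
  rw [hd, measure_lt_eq hGc hGm hc t₀, hc t₀, tsub_self]


lemma transfer_iid {n : ℕ} {Ω Ω' : Type} [MeasurableSpace Ω] [MeasurableSpace Ω']
    (P : Measure Ω) (Q : Measure Ω') [IsProbabilityMeasure P] [IsProbabilityMeasure Q]
    (A : Fin n → Ω → ℝ) (B : Fin n → Ω' → ℝ)
    (hA : IIDWithCdf P A unifCdf) (hB : IIDWithCdf Q B unifCdf)
    {S : Set (Fin n → ℝ)} (hS : MeasurableSet S) :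
    P {ω | (fun i => A i ω) ∈ S} = Q {ω | (fun i => B i ω) ∈ S} := by
  obtain ⟨hAm, hAi, hAc⟩ := hA
  obtain ⟨hBm, hBi, hBc⟩ := hB
  have hmarg : ∀ i, P.map (A i) = Q.map (B i) := by
    intro i
    haveI : IsProbabilityMeasure (P.map (A i)) :=
      Measure.isProbabilityMeasure_map (hAm i).aemeasurable
    apply MeasureTheory.Measure.ext_of_Iic
    intro t
    rw [Measure.map_apply (hAm i) measurableSet_Iic, Measure.map_apply (hBm i) measurableSet_Iic]
    exact (hAc i t).trans (hBc i t).symm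
  have h1 : P {ω | (fun i => A i ω) ∈ S} = (P.map (fun ω i => A i ω)) S := by
    rw [Measure.map_apply (measurable_pi_lambda _ hAm) hS]
    rfl
  have h2 : Q {ω | (fun i => B i ω) ∈ S} = (Q.map (fun ω i => B i ω)) S := by
    rw [Measure.map_apply (measurable_pi_lambda _ hBm) hS]
    rfl
  rw [h1, h2, map_eq_pi P A hAm hAi, map_eq_pi Q B hBm hBi,
    show (fun i => P.map (A i)) = fun i => Q.map (B i) from funext hmarg]

/-- Lemma 3.1: the tail of `Yₙ` under a Gaussian mixture whose
mixing distribution is supported on `[0, √(2 log n)]` is at most twice the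
tail of `Wₙ⁺`. -/
theorem stmt7 (n : ℕ) (H : Measure ℝ) (hH : IsProbabilityMeasure H)
    (hsupp : H (Set.Icc 0 (Real.sqrt (2 * Real.log n))) = 1)
    (Ω : Type) [MeasurableSpace Ω] (P : Measure Ω) (hP : IsProbabilityMeasure P)
    (X : Fin n → Ω → ℝ) (hX : IIDWithCdf P X (fun t => ∫ m, Phi (t - m) ∂H))
    (Ω' : Type) [MeasurableSpace Ω'] (Q : Measure Ω') (hQ : IsProbabilityMeasure Q)
    (U : Fin n → Ω' → ℝ) (hU : IIDWithCdf Q U unifCdf) :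
    ∀ c : ℝ, P {ω | c ≤ Yn n (fun t => ∫ m, Phi (t - m) ∂H) (fun i => X i ω)} ≤
      2 * Q {ω | c ≤ WnPlus n (fun i => U i ω)} := by
  intro c
  haveI := hH
  haveI := hP
  haveI := hQ
  obtain ⟨hXm, hXi, hXc⟩ := hX
  set T : ℝ := Real.sqrt (2 * Real.log n) with hT
  have hT0 : 0 ≤ T := Real.sqrt_nonneg _
  set F : ℝ → ℝ := fun t => ∫ m, Phi (t - m) ∂H with hF
  set b : ℝ := Phi T with hb
  have hb2 : (1:ℝ)/2 ≤ b := Phi_half_le hT0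
  have hb1 : b < 1 := Phi_lt_one T
  have hFmono : StrictMono F := F_strictMono
  have hFcont : Continuous F := F_continuous
  have hFleP : ∀ t, F t ≤ Phi t := F_le_Phi hsupp
  have hPleF : ∀ t, Phi (t - T) ≤ F t := Phi_le_F hsupp
  have hFpos : ∀ t, 0 < F t := fun t => (Phi_pos (t - T)).trans_le (hPleF t)
  have hFlt1 : ∀ t, F t < 1 := fun t => (hFleP t).trans_lt (Phi_lt_one t)
  -- the transformed samples
  set V : Fin n → Ω → ℝ := fun i ω => F (X i ω) with hV
  set W : Fin n → Ω → ℝ := fun i ω => 1 - F (X i ω) with hW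
  -- IID claims
  have hVC : ∀ i u, P {ω | V i ω ≤ u} = ENNReal.ofReal (unifCdf u) := by
    intro i u
    rcases le_or_gt u 0 with h0 | h0
    · have hset : {ω | V i ω ≤ u} = ∅ := by
        ext ω; simp only [Set.mem_setOf_eq, Set.mem_empty_iff_false, iff_false, not_le]
        exact lt_of_le_of_lt h0 (hFpos _)
      rw [hset, measure_empty]
      have hm : min u 1 ≤ 0 := le_trans (min_le_left _ _) h0
      rw [unifCdf, max_eq_left hm, ENNReal.ofReal_zero]
    rcases le_or_gt 1 u with h1 | h1
    · have hset : {ω | V i ω ≤ u} = Set.univ := by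
        ext ω; simp only [Set.mem_setOf_eq, Set.mem_univ, iff_true]
        exact le_trans (hFlt1 _).le h1
      rw [hset, measure_univ, unifCdf, min_eq_right h1, max_eq_right zero_le_one,
        ENNReal.ofReal_one]
    · obtain ⟨t₀, ht₀'⟩ := F_exists_eq hsupp h0 h1
      have ht₀ : F t₀ = u := ht₀'
      have hset : {ω | V i ω ≤ u} = {ω | X i ω ≤ t₀} := by
        ext ω
        simp only [Set.mem_setOf_eq, hV]
        rw [← ht₀]
        exact hFmono.le_iff_le
      rw [hset, hXc i t₀, ht₀, unifCdf, min_eq_left h1.le, max_eq_right h0.le]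
  have hVm : ∀ i, Measurable (V i) := fun i => hFcont.measurable.comp (hXm i)
  have hVi : iIndepFun V P :=
    hXi.comp (fun _ => F) (fun _ => hFcont.measurable)
  have hA : IIDWithCdf P V unifCdf := ⟨hVm, hVi, hVC⟩
  -- cdf as function identity for measure_lt_eq
  have hXcdf : ∀ i, ∀ t, P {ω | X i ω ≤ t} = ENNReal.ofReal (F t) := hXc
  have hWC : ∀ i u, P {ω | W i ω ≤ u} = ENNReal.ofReal (unifCdf u) := by
    intro i u
    rcases le_or_gt u 0 with h0 | h0
    · have hset : {ω | W i ω ≤ u} = ∅ := by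
        ext ω; simp only [Set.mem_setOf_eq, Set.mem_empty_iff_false, iff_false, not_le, hW]
        have := hFlt1 (X i ω); linarith
      rw [hset, measure_empty]
      have hm : min u 1 ≤ 0 := le_trans (min_le_left _ _) h0
      rw [unifCdf, max_eq_left hm, ENNReal.ofReal_zero]
    rcases le_or_gt 1 u with h1 | h1
    · have hset : {ω | W i ω ≤ u} = Set.univ := by
        ext ω; simp only [Set.mem_setOf_eq, Set.mem_univ, iff_true, hW]
        have := hFpos (X i ω); linarith
      rw [hset, measure_univ, unifCdf, min_eq_right h1, max_eq_right zero_le_one,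
        ENNReal.ofReal_one]
    · obtain ⟨t₀, ht₀'⟩ := F_exists_eq hsupp (show (0:ℝ) < 1 - u by linarith)
        (show (1:ℝ) - u < 1 by linarith)
      have ht₀ : F t₀ = 1 - u := ht₀'
      have hset : {ω | W i ω ≤ u} = ({ω | X i ω < t₀})ᶜ := by
        ext ω
        simp only [Set.mem_setOf_eq, Set.mem_compl_iff, not_lt, hW]
        constructor
        · intro h
          have : F t₀ ≤ F (X i ω) := by rw [ht₀]; linarith
          exact (hFmono.le_iff_le).1 this
        · intro h
          have : F t₀ ≤ F (X i ω) := (hFmono.le_iff_le).2 h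
          rw [ht₀] at this; linarith
      rw [hset, measure_compl (measurableSet_lt (hXm i) measurable_const) (measure_ne_top P _)]
      rw [show {a | X i a < t₀} = {ω | X i ω < t₀} from rfl,
        measure_lt_eq hFcont hFmono.monotone (hXcdf i) t₀, ht₀, measure_univ]
      rw [unifCdf, min_eq_left h1.le, max_eq_right h0.le]
      rw [← ENNReal.ofReal_one, ← ENNReal.ofReal_sub _ (by linarith)]
      norm_num
  have hWm : ∀ i, Measurable (W i) := fun i =>
    (measurable_const.sub (hFcont.measurable.comp (hXm i)))
  have hWi : iIndepFun W P :=
    hXi.comp (fun _ => fun x => 1 - F x)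
      (fun _ => measurable_const.sub hFcont.measurable)
  have hB : IIDWithCdf P W unifCdf := ⟨hWm, hWi, hWC⟩
  -- null atoms
  have hnull : ∀ i, P {ω | W i ω = 1/2} = 0 := by
    intro i
    obtain ⟨t₀, ht₀'⟩ := F_exists_eq hsupp (show (0:ℝ) < 1/2 by norm_num)
      (show (1:ℝ)/2 < 1 by norm_num)
    have ht₀ : F t₀ = 1/2 := ht₀'
    have hset : {ω | W i ω = 1/2} = {ω | X i ω = t₀} := by
      ext ω
      simp only [Set.mem_setOf_eq, hW]
      constructor
      · intro h
        have : F (X i ω) = F t₀ := by rw [ht₀]; linarith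
        exact hFmono.injective this
      · intro h; rw [h, ht₀]; norm_num
    rw [hset]
    exact measure_eq_pt (hXm i) hFcont hFmono.monotone (hXcdf i) t₀
  -- pointwise domination of Yn
  have hdom : ∀ ω : Ω, Yn n F (fun i => X i ω) ≤
      max (sSup (ratioFn n (fun i => V i ω) '' Set.Icc (1-b) (1/2)))
          (sSup (ratioFn n (fun i => V i ω) '' Set.Icc (1/2) b)) := by
    intro ω
    have himg : ((fun t => Real.sqrt n * |empCdf n (fun i => X i ω) t - F t| /
          Real.sqrt (F t * (1 - F t))) '' Set.Icc 0 T)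
        = ratioFn n (fun i => V i ω) '' (F '' Set.Icc 0 T) := by
      rw [Set.image_image]
      apply Set.image_congr
      intro t _
      unfold ratioFn
      have hemp : empCdf n (fun i => V i ω) (F t) = empCdf n (fun i => X i ω) t := by
        unfold empCdf
        congr 1
        apply Finset.sum_congr rfl
        intro i _
        exact if_congr hFmono.le_iff_le rfl rfl
      rw [hemp]
    have hYn : Yn n F (fun i => X i ω)
        = sSup (ratioFn n (fun i => V i ω) '' (F '' Set.Icc 0 T)) := by
      unfold Yn
      rw [← himg]
    rw [hYn]
    apply csSup_le ((Set.Nonempty.image _ (Set.Nonempty.image _ ⟨0, Set.left_mem_Icc.2 hT0⟩)))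
    rintro r ⟨u, ⟨t, ht, rfl⟩, rfl⟩
    have hu1 : F t ≤ b := (hFleP t).trans (Phi_mono ht.2)
    have hu2 : 1 - b ≤ F t := by
      have h1 : Phi (-T) ≤ Phi (t - T) := Phi_mono (by linarith [ht.1])
      have h2 := Phi_neg T
      have := hPleF t
      show 1 - Phi T ≤ F t
      linarith
    rcases le_total (F t) (1/2) with hc2 | hc2
    · apply le_max_of_le_left
      apply le_csSup (bddAbove_ratioFn hb1 _ (Set.Icc_subset_Icc_right hb2))
      exact ⟨F t, ⟨hu2, hc2⟩, rfl⟩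
    · apply le_max_of_le_right
      apply le_csSup (bddAbove_ratioFn hb1 _ (Icc_half_subset hb2))
      exact ⟨F t, ⟨hc2, hu1⟩, rfl⟩
  -- measurable target set
  set Sset : Set (Fin n → ℝ) :=
    (fun v : Fin n → ℝ => sSup (ratioFn n v '' Set.Icc (1/2) b)) ⁻¹' Set.Ici c with hSset
  have hSmeas : MeasurableSet Sset := (measurable_sSup_ratio hb2 hb1) measurableSet_Ici
  -- event inclusion
  have hsub : {ω | c ≤ Yn n F (fun i => X i ω)} ⊆
      ({ω | (fun i => W i ω) ∈ Sset} ∪ (⋃ i, {ω | W i ω = 1/2}))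
        ∪ {ω | (fun i => V i ω) ∈ Sset} := by
    intro ω hω
    have hc' := le_trans hω (hdom ω)
    rcases le_max_iff.1 hc' with h1 | h2
    · left
      have hrefl : sSup (ratioFn n (fun i => V i ω) '' Set.Icc (1-b) (1/2))
          = sSup (ratioFn' n (fun i => W i ω) '' Set.Icc (1/2) b) := by
        rw [reflect_sSup n (fun i => V i ω) b]
      rw [hrefl] at h1
      by_cases hatom : ∀ i, W i ω ≠ 1/2
      · left
        have := sSup_ratio'_le hb2 hb1 (fun i => W i ω) hatom
        exact Set.mem_preimage.2 (le_trans h1 this)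
      · right
        push_neg at hatom
        obtain ⟨i, hi⟩ := hatom
        exact Set.mem_iUnion.2 ⟨i, hi⟩
    · right
      exact Set.mem_preimage.2 h2
  -- WnPlus identification
  have hWn : {ω : Ω' | (fun i => U i ω) ∈ Sset} = {ω | c ≤ WnPlus n (fun i => U i ω)} := by
    rfl
  have htrans1 : P {ω | (fun i => V i ω) ∈ Sset} = Q {ω | (fun i => U i ω) ∈ Sset} :=
    transfer_iid P Q V U hA hU hSmeas
  have htrans2 : P {ω | (fun i => W i ω) ∈ Sset} = Q {ω | (fun i => U i ω) ∈ Sset} :=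
    transfer_iid P Q W U hB hU hSmeas
  calc P {ω | c ≤ Yn n F (fun i => X i ω)}
      ≤ P (({ω | (fun i => W i ω) ∈ Sset} ∪ (⋃ i, {ω | W i ω = 1/2}))
        ∪ {ω | (fun i => V i ω) ∈ Sset}) := measure_mono hsub
    _ ≤ P ({ω | (fun i => W i ω) ∈ Sset} ∪ (⋃ i, {ω | W i ω = 1/2}))
        + P {ω | (fun i => V i ω) ∈ Sset} := measure_union_le _ _
    _ ≤ (P {ω | (fun i => W i ω) ∈ Sset} + P (⋃ i, {ω | W i ω = 1/2}))
        + P {ω | (fun i => V i ω) ∈ Sset} := by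
        gcongr
        exact measure_union_le _ _
    _ = Q {ω | (fun i => U i ω) ∈ Sset} + Q {ω | (fun i => U i ω) ∈ Sset} := by
        have h0 : P (⋃ i, {ω | W i ω = 1/2}) = 0 := by
          apply le_antisymm _ (by positivity)
          calc P (⋃ i, {ω | W i ω = 1/2}) ≤ ∑' i, P {ω | W i ω = 1/2} := measure_iUnion_le _
            _ = 0 := by simp only [hnull, tsum_zero]
        rw [h0, add_zero, htrans1, htrans2]
    _ = 2 * Q {ω | c ≤ WnPlus n (fun i => U i ω)} := by
        rw [hWn, two_mul]


end
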